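/- Let k > 0, β > 0, Re > 0 be real, and let c, μ, C₁, C₂, C₃, C₄ be complex numbers with μ² = β·k² − i·Re·√β·k·c. Define A(z) = C₁·cosh(√β·k·(z−1)) + C₂·sinh(√β·k·(z−1)) + C₃·cosh(μ·(z−1)) + C₄·sinh(μ·(z−1)) and w(x,z,t) = A(z)·exp(i·k·(x − c·t)). Then w satisfies the four boundary conditions — ∂_z w(x,0,t) = 0, w(x,0,t) = 0, ∂_z²w(x,1,t) − β∂_x²w(x,1,t) = 0, and ∂_x²w(x,1,t) − ∂_z∂_t²w(x,1,t) + (3√β/Re)∂_x²∂_z∂_t w(x,1,t) + (1/(Re√β))∂_z³∂_t w(x,1,t) = 0 for all x, t ∈ ℝ — if and only if the vector (C₁,C₂,C₃,C₄) lies in the kernel of the 4×4 complex matrix M with rows: row 1 = (√β·k·sinh(√β k), −√β·k·cosh(√β k), μ·sinh μ, −μ·cosh μ); row 2 = (cosh(√β k), −sinh(√β k), cosh μ, −sinh μ); row 3 = (2k²β, 0, μ² + βk², 0); row 4 = (−k², √β·k³·c² + 2iβk⁴c/Re, −k², 2μ·√β·i·k³·c/Re). -/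

import Mathlib

open Real Complex

noncomputable def Gfun (a P Q : ℂ) (z : ℝ) : ℂ :=
  P * Complex.cosh (a * ((z : ℂ) - 1)) + Q * Complex.sinh (a * ((z : ℂ) - 1))

lemma hasDerivAt_Gfun (a P Q : ℂ) (z : ℝ) :
    HasDerivAt (fun z : ℝ => Gfun a P Q z) (Gfun a (a * Q) (a * P) z) z := by
  have h0 : HasDerivAt (fun w : ℂ => a * (w - 1)) a (z : ℂ) := by
    simpa using ((hasDerivAt_id ((z:ℝ) : ℂ)).sub_const 1).const_mul a
  have hc : HasDerivAt (fun w : ℂ => Complex.cosh (a * (w - 1)))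
      (Complex.sinh (a * ((z:ℂ) - 1)) * a) (z : ℂ) := by
    exact (Complex.hasDerivAt_cosh (a * ((z:ℂ) - 1))).comp (z:ℂ) h0
  have hs : HasDerivAt (fun w : ℂ => Complex.sinh (a * (w - 1)))
      (Complex.cosh (a * ((z:ℂ) - 1)) * a) (z : ℂ) := by
    exact (Complex.hasDerivAt_sinh (a * ((z:ℂ) - 1))).comp (z:ℂ) h0
  have h := ((hc.comp_ofReal).const_mul P).add ((hs.comp_ofReal).const_mul Q)
  simp only [Gfun]
  exact h.congr_deriv (by ring)

lemma hasDerivAt_Ex (k c t : ℂ) (x : ℝ) :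
    HasDerivAt (fun x : ℝ => Complex.exp (Complex.I * k * ((x : ℂ) - c * t)))
      (Complex.I * k * Complex.exp (Complex.I * k * ((x : ℂ) - c * t))) x := by
  have h0 : HasDerivAt (fun w : ℂ => Complex.I * k * (w - c * t)) (Complex.I * k) (x : ℂ) := by
    simpa using ((hasDerivAt_id ((x:ℝ):ℂ)).sub_const (c * t)).const_mul (Complex.I * k)
  have h := (Complex.hasDerivAt_exp _).comp ((x:ℝ):ℂ) h0
  simpa [Function.comp, mul_comm] using h.comp_ofReal

lemma hasDerivAt_Et (k c x : ℂ) (t : ℝ) :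
    HasDerivAt (fun t : ℝ => Complex.exp (Complex.I * k * (x - c * (t : ℂ))))
      (-(Complex.I * k * c) * Complex.exp (Complex.I * k * (x - c * (t : ℂ)))) t := by
  have h0 : HasDerivAt (fun w : ℂ => Complex.I * k * (x - c * w)) (-(Complex.I * k * c)) (t : ℂ) := by
    have h := (((hasDerivAt_id ((t:ℝ):ℂ)).const_mul c).const_sub x).const_mul (Complex.I * k)
    exact h.congr_deriv (by ring)
  have h := (Complex.hasDerivAt_exp _).comp ((t:ℝ):ℂ) h0
  simpa [Function.comp, mul_comm] using h.comp_ofReal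

lemma cond3_identity (k βc a μ C₁ C₃ E : ℂ) (haa : a * a = βc * k ^ 2) :
    (a * (a * C₁) + μ * (μ * C₃)) * E
      - βc * ((C₁ + C₃) * (Complex.I * k * (Complex.I * k * E)))
    = (2 * k ^ 2 * βc * C₁ + (μ ^ 2 + βc * k ^ 2) * C₃) * E := by
  have hI : Complex.I * Complex.I = -1 := Complex.I_mul_I
  linear_combination (C₁ * E) * haa - (βc * k ^ 2 * E * (C₁ + C₃)) * hI

lemma cond4_identity (k c Re s μ C₁ C₂ C₃ C₄ E : ℂ) (hs : s ≠ 0) (hRe : Re ≠ 0)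
    (hμ : μ ^ 2 = s * s * k ^ 2 - Complex.I * Re * s * k * c) :
    (C₁ + C₃) * (Complex.I * k * (Complex.I * k * E))
      - (s * k * C₂ + μ * C₄) * (-(Complex.I * k * c) * (-(Complex.I * k * c) * E))
      + 3 * s / Re * ((s * k * C₂ + μ * C₄) *
          (-(Complex.I * k * c) * (Complex.I * k * (Complex.I * k * E))))
      + 1 / (Re * s) * ((s * k * (s * k * (s * k * C₂)) + μ * (μ * (μ * C₄))) *
          (-(Complex.I * k * c) * E))
    = (-(k ^ 2) * C₁
        + (s * k ^ 3 * c ^ 2 + 2 * Complex.I * (s * s) * k ^ 4 * c / Re) * C₂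
        + -(k ^ 2) * C₃
        + 2 * μ * s * Complex.I * k ^ 3 * c / Re * C₄) * E := by
  have hI : Complex.I * Complex.I = -1 := Complex.I_mul_I
  field_simp
  linear_combination
    (k ^ 2 * E * s * Re * (C₁ + C₃) - k ^ 2 * s * Re * c ^ 2 * E * (k * s * C₂ + μ * C₄)
      - 3 * Complex.I * k ^ 3 * s ^ 2 * c * E * (k * s * C₂ + μ * C₄)
      + k ^ 2 * c ^ 2 * E * μ * C₄ * Re * s) * hI
    + (-(Complex.I * k * c * E * μ * C₄)) * hμ

/-- the plane-wave ansatz satisfies the four boundary conditions (2.9)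
iff the coefficient vector lies in the kernel of the matrix (2.9bis). -/
theorem boundary_conditions_iff_kernel (k β Re : ℝ) (hk : 0 < k) (hβ : 0 < β) (hRe : 0 < Re)
    (c μ C₁ C₂ C₃ C₄ : ℂ)
    (hμ : μ ^ 2 = (β : ℂ) * (k : ℂ) ^ 2 - Complex.I * (Re : ℂ) * ((Real.sqrt β : ℝ) : ℂ) * (k : ℂ) * c)
    (A : ℝ → ℂ)
    (hA : ∀ z : ℝ, A z =
      C₁ * Complex.cosh (((Real.sqrt β * k : ℝ) : ℂ) * ((z : ℂ) - 1)) +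
      C₂ * Complex.sinh (((Real.sqrt β * k : ℝ) : ℂ) * ((z : ℂ) - 1)) +
      C₃ * Complex.cosh (μ * ((z : ℂ) - 1)) +
      C₄ * Complex.sinh (μ * ((z : ℂ) - 1)))
    (w : ℝ → ℝ → ℝ → ℂ)
    (hw : ∀ x z t : ℝ, w x z t = A z * Complex.exp (Complex.I * (k : ℂ) * ((x : ℂ) - c * (t : ℂ))))
    (M : Matrix (Fin 4) (Fin 4) ℂ)
    (hM : M = !![
      ((Real.sqrt β * k : ℝ) : ℂ) * Complex.sinh ((Real.sqrt β * k : ℝ) : ℂ),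
        -(((Real.sqrt β * k : ℝ) : ℂ) * Complex.cosh ((Real.sqrt β * k : ℝ) : ℂ)),
        μ * Complex.sinh μ, -(μ * Complex.cosh μ);
      Complex.cosh ((Real.sqrt β * k : ℝ) : ℂ), -Complex.sinh ((Real.sqrt β * k : ℝ) : ℂ),
        Complex.cosh μ, -Complex.sinh μ;
      2 * (k : ℂ) ^ 2 * (β : ℂ), 0, μ ^ 2 + (β : ℂ) * (k : ℂ) ^ 2, 0;
      -((k : ℂ) ^ 2),
        ((Real.sqrt β : ℝ) : ℂ) * (k : ℂ) ^ 3 * c ^ 2 +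
          2 * Complex.I * (β : ℂ) * (k : ℂ) ^ 4 * c / (Re : ℂ),
        -((k : ℂ) ^ 2),
        2 * μ * ((Real.sqrt β : ℝ) : ℂ) * Complex.I * (k : ℂ) ^ 3 * c / (Re : ℂ)]) :
    ((∀ x t : ℝ,
        deriv (fun z' => w x z' t) 0 = 0 ∧
        w x 0 t = 0 ∧
        deriv (fun z' => deriv (fun z'' => w x z'' t) z') 1
          - (β : ℂ) * deriv (fun x' => deriv (fun x'' => w x'' 1 t) x') x = 0 ∧
        deriv (fun x' => deriv (fun x'' => w x'' 1 t) x') x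
          - deriv (fun z' => deriv (fun t' => deriv (fun t'' => w x z' t'') t') t) 1
          + ((3 * Real.sqrt β / Re : ℝ) : ℂ) *
              deriv (fun x' => deriv (fun x'' =>
                deriv (fun z' => deriv (fun t' => w x'' z' t') t) 1) x') x
          + ((1 / (Re * Real.sqrt β) : ℝ) : ℂ) *
              deriv (fun z1 => deriv (fun z2 => deriv (fun z3 =>
                deriv (fun t' => w x z3 t') t) z2) z1) 1 = 0)
      ↔ M.mulVec ![C₁, C₂, C₃, C₄] = 0) := by
  have hEne : ∀ x t : ℝ,
      Complex.exp (Complex.I * (k : ℂ) * ((x : ℂ) - c * (t : ℂ))) ≠ 0 :=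
    fun x t => Complex.exp_ne_zero _
  set E : ℝ → ℝ → ℂ :=
    fun x t => Complex.exp (Complex.I * (k : ℂ) * ((x : ℂ) - c * (t : ℂ))) with hE
  set a : ℂ := ((Real.sqrt β * k : ℝ) : ℂ) with ha
  have hsne : ((Real.sqrt β : ℝ) : ℂ) ≠ 0 :=
    Complex.ofReal_ne_zero.mpr (Real.sqrt_ne_zero'.mpr hβ)
  have hRene : ((Re : ℝ) : ℂ) ≠ 0 := Complex.ofReal_ne_zero.mpr (ne_of_gt hRe)
  have hb : ((Real.sqrt β : ℝ) : ℂ) * ((Real.sqrt β : ℝ) : ℂ) = (β : ℂ) := by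
    rw [← Complex.ofReal_mul, Real.mul_self_sqrt hβ.le]
  have hak : a = ((Real.sqrt β : ℝ) : ℂ) * (k : ℂ) := by rw [ha]; push_cast; ring
  have haa : a * a = (β : ℂ) * (k : ℂ) ^ 2 := by
    rw [hak]; linear_combination (k : ℂ) ^ 2 * hb
  have hμ' : μ ^ 2 = ((Real.sqrt β : ℝ) : ℂ) * ((Real.sqrt β : ℝ) : ℂ) * (k : ℂ) ^ 2
      - Complex.I * (Re : ℂ) * ((Real.sqrt β : ℝ) : ℂ) * (k : ℂ) * c := by
    rw [hμ, ← hb]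
  have hc3 : ((3 * Real.sqrt β / Re : ℝ) : ℂ)
      = 3 * ((Real.sqrt β : ℝ) : ℂ) / (Re : ℂ) := by push_cast; ring
  have hc4 : ((1 / (Re * Real.sqrt β) : ℝ) : ℂ)
      = 1 / ((Re : ℂ) * ((Real.sqrt β : ℝ) : ℂ)) := by push_cast; ring
  set A0 : ℝ → ℂ := fun z => Gfun a C₁ C₂ z + Gfun μ C₃ C₄ z with hA0
  set A1 : ℝ → ℂ :=
    fun z => Gfun a (a * C₂) (a * C₁) z + Gfun μ (μ * C₄) (μ * C₃) z with hA1d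
  set A2 : ℝ → ℂ :=
    fun z => Gfun a (a * (a * C₁)) (a * (a * C₂)) z
      + Gfun μ (μ * (μ * C₃)) (μ * (μ * C₄)) z with hA2d
  set A3 : ℝ → ℂ :=
    fun z => Gfun a (a * (a * (a * C₂))) (a * (a * (a * C₁))) z
      + Gfun μ (μ * (μ * (μ * C₄))) (μ * (μ * (μ * C₃))) z with hA3d
  have dA0 : ∀ z : ℝ, HasDerivAt A0 (A1 z) z := by
    intro z; rw [hA0, hA1d]
    exact (hasDerivAt_Gfun a C₁ C₂ z).add (hasDerivAt_Gfun μ C₃ C₄ z)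
  have dA1 : ∀ z : ℝ, HasDerivAt A1 (A2 z) z := by
    intro z; rw [hA1d, hA2d]
    exact (hasDerivAt_Gfun a (a * C₂) (a * C₁) z).add
      (hasDerivAt_Gfun μ (μ * C₄) (μ * C₃) z)
  have dA2 : ∀ z : ℝ, HasDerivAt A2 (A3 z) z := by
    intro z; rw [hA2d, hA3d]
    exact (hasDerivAt_Gfun a (a * (a * C₁)) (a * (a * C₂)) z).add
      (hasDerivAt_Gfun μ (μ * (μ * C₃)) (μ * (μ * C₄)) z)
  have hw' : ∀ x z t : ℝ, w x z t = A0 z * E x t := by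
    intro x z t
    rw [hw x z t, hA z, hA0, hE]
    simp only [Gfun]
    ring
  have hmul : ∀ (u : ℂ) (x t : ℝ), u * E x t = 0 ↔ u = 0 := by
    intro u x t
    constructor
    · intro h
      rcases mul_eq_zero.mp h with h | h
      · exact h
      · rw [hE] at h; exact absurd h (hEne x t)
    · intro h; rw [h, zero_mul]
  -- z derivatives
  have hz1 : ∀ x t z : ℝ, deriv (fun z' : ℝ => w x z' t) z = A1 z * E x t := by
    intro x t z
    have hfun : (fun z' : ℝ => w x z' t) = fun z' : ℝ => A0 z' * E x t :=
      funext fun z' => hw' x z' t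
    rw [hfun]
    exact ((dA0 z).mul_const (E x t)).deriv
  have hz2 : ∀ x t z : ℝ,
      deriv (fun z' : ℝ => deriv (fun z'' : ℝ => w x z'' t) z') z = A2 z * E x t := by
    intro x t z
    have hfun : (fun z' : ℝ => deriv (fun z'' : ℝ => w x z'' t) z')
        = fun z' : ℝ => A1 z' * E x t := funext fun z' => hz1 x t z'
    rw [hfun]
    exact ((dA1 z).mul_const (E x t)).deriv
  -- x derivatives
  have hx1 : ∀ z t x : ℝ, deriv (fun x'' : ℝ => w x'' z t) x
      = A0 z * (Complex.I * (k : ℂ) * E x t) := by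
    intro z t x
    have hfun : (fun x'' : ℝ => w x'' z t) = fun x'' : ℝ => A0 z * E x'' t :=
      funext fun x'' => hw' x'' z t
    rw [hfun, hE]
    exact ((hasDerivAt_Ex (k : ℂ) c ((t : ℝ) : ℂ) x).const_mul (A0 z)).deriv
  have hx2 : ∀ z t x : ℝ,
      deriv (fun x' : ℝ => deriv (fun x'' : ℝ => w x'' z t) x') x
      = A0 z * (Complex.I * (k : ℂ) * (Complex.I * (k : ℂ) * E x t)) := by
    intro z t x
    have hfun : (fun x' : ℝ => deriv (fun x'' : ℝ => w x'' z t) x')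
        = fun x' : ℝ => A0 z * (Complex.I * (k : ℂ) * E x' t) :=
      funext fun x' => hx1 z t x'
    rw [hfun, hE]
    exact (((hasDerivAt_Ex (k : ℂ) c ((t : ℝ) : ℂ) x).const_mul
      (Complex.I * (k : ℂ))).const_mul (A0 z)).deriv
  -- t derivatives
  have ht1 : ∀ x z t : ℝ, deriv (fun t' : ℝ => w x z t') t
      = A0 z * (-(Complex.I * (k : ℂ) * c) * E x t) := by
    intro x z t
    have hfun : (fun t' : ℝ => w x z t') = fun t' : ℝ => A0 z * E x t' :=
      funext fun t' => hw' x z t'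
    rw [hfun, hE]
    exact ((hasDerivAt_Et (k : ℂ) c ((x : ℝ) : ℂ) t).const_mul (A0 z)).deriv
  have htt : ∀ x z t : ℝ,
      deriv (fun t' : ℝ => deriv (fun t'' : ℝ => w x z t'') t') t
      = A0 z * (-(Complex.I * (k : ℂ) * c) * (-(Complex.I * (k : ℂ) * c) * E x t)) := by
    intro x z t
    have hfun : (fun t' : ℝ => deriv (fun t'' : ℝ => w x z t'') t')
        = fun t' : ℝ => A0 z * (-(Complex.I * (k : ℂ) * c) * E x t') :=
      funext fun t' => ht1 x z t'
    rw [hfun, hE]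
    exact (((hasDerivAt_Et (k : ℂ) c ((x : ℝ) : ℂ) t).const_mul
      (-(Complex.I * (k : ℂ) * c))).const_mul (A0 z)).deriv
  have hztt : ∀ x t : ℝ,
      deriv (fun z' : ℝ => deriv (fun t' : ℝ => deriv (fun t'' : ℝ => w x z' t'') t') t) 1
      = A1 1 * (-(Complex.I * (k : ℂ) * c) * (-(Complex.I * (k : ℂ) * c) * E x t)) := by
    intro x t
    have hfun : (fun z' : ℝ =>
        deriv (fun t' : ℝ => deriv (fun t'' : ℝ => w x z' t'') t') t)
        = fun z' : ℝ => A0 z' *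
            (-(Complex.I * (k : ℂ) * c) * (-(Complex.I * (k : ℂ) * c) * E x t)) :=
      funext fun z' => htt x z' t
    rw [hfun]
    exact ((dA0 1).mul_const _).deriv
  have hzt : ∀ x t z : ℝ,
      deriv (fun z' : ℝ => deriv (fun t' : ℝ => w x z' t') t) z
      = A1 z * (-(Complex.I * (k : ℂ) * c) * E x t) := by
    intro x t z
    have hfun : (fun z' : ℝ => deriv (fun t' : ℝ => w x z' t') t)
        = fun z' : ℝ => A0 z' * (-(Complex.I * (k : ℂ) * c) * E x t) :=
      funext fun z' => ht1 x z' t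
    rw [hfun]
    exact ((dA0 z).mul_const _).deriv
  have hxzt : ∀ t x : ℝ,
      deriv (fun x'' : ℝ =>
        deriv (fun z' : ℝ => deriv (fun t' : ℝ => w x'' z' t') t) 1) x
      = A1 1 * (-(Complex.I * (k : ℂ) * c) * (Complex.I * (k : ℂ) * E x t)) := by
    intro t x
    have hfun : (fun x'' : ℝ =>
        deriv (fun z' : ℝ => deriv (fun t' : ℝ => w x'' z' t') t) 1)
        = fun x'' : ℝ => A1 1 * (-(Complex.I * (k : ℂ) * c) * E x'' t) :=
      funext fun x'' => hzt x'' t 1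
    rw [hfun, hE]
    exact (((hasDerivAt_Ex (k : ℂ) c ((t : ℝ) : ℂ) x).const_mul
      (-(Complex.I * (k : ℂ) * c))).const_mul (A1 1)).deriv
  have hxxzt : ∀ t x : ℝ,
      deriv (fun x' : ℝ => deriv (fun x'' : ℝ =>
        deriv (fun z' : ℝ => deriv (fun t' : ℝ => w x'' z' t') t) 1) x') x
      = A1 1 * (-(Complex.I * (k : ℂ) * c) *
          (Complex.I * (k : ℂ) * (Complex.I * (k : ℂ) * E x t))) := by
    intro t x
    have hfun : (fun x' : ℝ => deriv (fun x'' : ℝ =>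
        deriv (fun z' : ℝ => deriv (fun t' : ℝ => w x'' z' t') t) 1) x')
        = fun x' : ℝ => A1 1 *
            (-(Complex.I * (k : ℂ) * c) * (Complex.I * (k : ℂ) * E x' t)) :=
      funext fun x' => hxzt t x'
    rw [hfun, hE]
    exact ((((hasDerivAt_Ex (k : ℂ) c ((t : ℝ) : ℂ) x).const_mul
      (Complex.I * (k : ℂ))).const_mul
      (-(Complex.I * (k : ℂ) * c))).const_mul (A1 1)).deriv
  have hz2t : ∀ x t z : ℝ,
      deriv (fun z2 : ℝ => deriv (fun z3 : ℝ => deriv (fun t' : ℝ => w x z3 t') t) z2) z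
      = A2 z * (-(Complex.I * (k : ℂ) * c) * E x t) := by
    intro x t z
    have hfun : (fun z2 : ℝ => deriv (fun z3 : ℝ => deriv (fun t' : ℝ => w x z3 t') t) z2)
        = fun z2 : ℝ => A1 z2 * (-(Complex.I * (k : ℂ) * c) * E x t) :=
      funext fun z2 => hzt x t z2
    rw [hfun]
    exact ((dA1 z).mul_const _).deriv
  have hz3t : ∀ x t : ℝ,
      deriv (fun z1 : ℝ => deriv (fun z2 : ℝ => deriv (fun z3 : ℝ =>
        deriv (fun t' : ℝ => w x z3 t') t) z2) z1) 1
      = A3 1 * (-(Complex.I * (k : ℂ) * c) * E x t) := by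
    intro x t
    have hfun : (fun z1 : ℝ => deriv (fun z2 : ℝ => deriv (fun z3 : ℝ =>
        deriv (fun t' : ℝ => w x z3 t') t) z2) z1)
        = fun z1 : ℝ => A2 z1 * (-(Complex.I * (k : ℂ) * c) * E x t) :=
      funext fun z1 => hz2t x t z1
    rw [hfun]
    exact ((dA2 1).mul_const _).deriv
  -- values
  have hval1 : ∀ b P Q : ℂ, Gfun b P Q 1 = P := by
    intro b P Q; simp [Gfun]
  have hval0 : ∀ b P Q : ℂ, Gfun b P Q 0 = P * Complex.cosh b - Q * Complex.sinh b := by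
    intro b P Q
    simp only [Gfun, Complex.ofReal_zero, zero_sub, mul_neg_one,
      Complex.cosh_neg, Complex.sinh_neg]
    ring
  have vA0_1 : A0 1 = C₁ + C₃ := by
    simp only [hA0]; rw [hval1, hval1]
  have vA2_1 : A2 1 = a * (a * C₁) + μ * (μ * C₃) := by
    simp only [hA2d]; rw [hval1, hval1]
  have vA1_1s : A1 1 = ((Real.sqrt β : ℝ) : ℂ) * (k : ℂ) * C₂ + μ * C₄ := by
    simp only [hA1d]; rw [hval1, hval1, hak]
  have vA3_1s : A3 1 = ((Real.sqrt β : ℝ) : ℂ) * (k : ℂ) *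
      (((Real.sqrt β : ℝ) : ℂ) * (k : ℂ) * (((Real.sqrt β : ℝ) : ℂ) * (k : ℂ) * C₂))
      + μ * (μ * (μ * C₄)) := by
    simp only [hA3d]; rw [hval1, hval1, hak]
  have vA0_0 : A0 0 = C₁ * Complex.cosh a - C₂ * Complex.sinh a
      + C₃ * Complex.cosh μ - C₄ * Complex.sinh μ := by
    simp only [hA0]; rw [hval0, hval0]; ring
  have vA1_0 : A1 0 = a * C₂ * Complex.cosh a - a * C₁ * Complex.sinh a
      + μ * C₄ * Complex.cosh μ - μ * C₃ * Complex.sinh μ := by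
    simp only [hA1d]; rw [hval0, hval0]; ring
  -- kernel components
  have hv : ∀ v : Fin 4 → ℂ, (v = 0 ↔ (v 0 = 0 ∧ v 1 = 0 ∧ v 2 = 0 ∧ v 3 = 0)) := by
    intro v
    constructor
    · intro h; rw [h]; simp
    · rintro ⟨h0, h1, h2, h3⟩
      funext i
      fin_cases i <;> simpa
  have m0 : M.mulVec ![C₁, C₂, C₃, C₄] 0
      = a * Complex.sinh a * C₁ - a * Complex.cosh a * C₂
        + μ * Complex.sinh μ * C₃ - μ * Complex.cosh μ * C₄ := by
    rw [hM]
    simp [Matrix.mulVec, dotProduct, Fin.sum_univ_four]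
    try ring
  have m1 : M.mulVec ![C₁, C₂, C₃, C₄] 1
      = Complex.cosh a * C₁ - Complex.sinh a * C₂
        + Complex.cosh μ * C₃ - Complex.sinh μ * C₄ := by
    rw [hM]
    simp [Matrix.mulVec, dotProduct, Fin.sum_univ_four]
    try ring
  have m2 : M.mulVec ![C₁, C₂, C₃, C₄] 2
      = 2 * (k : ℂ) ^ 2 * (β : ℂ) * C₁ + (μ ^ 2 + (β : ℂ) * (k : ℂ) ^ 2) * C₃ := by
    rw [hM]
    simp [Matrix.mulVec, dotProduct, Fin.sum_univ_four]
    try ring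
  have m3 : M.mulVec ![C₁, C₂, C₃, C₄] 3
      = -((k : ℂ) ^ 2) * C₁
        + (((Real.sqrt β : ℝ) : ℂ) * (k : ℂ) ^ 3 * c ^ 2
            + 2 * Complex.I * (((Real.sqrt β : ℝ) : ℂ) * ((Real.sqrt β : ℝ) : ℂ))
              * (k : ℂ) ^ 4 * c / (Re : ℂ)) * C₂
        + -((k : ℂ) ^ 2) * C₃
        + 2 * μ * ((Real.sqrt β : ℝ) : ℂ) * Complex.I * (k : ℂ) ^ 3 * c / (Re : ℂ) * C₄ := by
    rw [hM, hb]
    simp [Matrix.mulVec, dotProduct, Fin.sum_univ_four]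
    try ring
  rw [hv (M.mulVec ![C₁, C₂, C₃, C₄]), m0, m1, m2, m3]
  constructor
  · intro h
    obtain ⟨h1, h2, h3, h4⟩ := h 0 0
    rw [hz1 0 0 0] at h1
    rw [hw' 0 0 0] at h2
    rw [hz2 0 0 1, hx2 1 0 0, vA2_1, vA0_1,
      cond3_identity (k : ℂ) (β : ℂ) a μ C₁ C₃ (E 0 0) haa] at h3
    rw [hx2 1 0 0, hztt 0 0, hc3, hxxzt 0 0, hc4, hz3t 0 0, vA0_1, vA1_1s, vA3_1s,
      cond4_identity (k : ℂ) c (Re : ℂ) ((Real.sqrt β : ℝ) : ℂ) μ C₁ C₂ C₃ C₄ (E 0 0)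
        hsne hRene hμ'] at h4
    refine ⟨?_, ?_, ?_, ?_⟩
    · have h1' := (hmul _ 0 0).mp h1
      rw [vA1_0] at h1'
      linear_combination -h1'
    · have h2' := (hmul _ 0 0).mp h2
      rw [vA0_0] at h2'
      linear_combination h2'
    · exact (hmul _ 0 0).mp h3
    · exact (hmul _ 0 0).mp h4
  · rintro ⟨g1, g2, g3, g4⟩ x t
    refine ⟨?_, ?_, ?_, ?_⟩
    · rw [hz1 x t 0]
      refine (hmul _ x t).mpr ?_
      rw [vA1_0]
      linear_combination -g1
    · rw [hw' x 0 t]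
      refine (hmul _ x t).mpr ?_
      rw [vA0_0]
      linear_combination g2
    · rw [hz2 x t 1, hx2 1 t x, vA2_1, vA0_1,
        cond3_identity (k : ℂ) (β : ℂ) a μ C₁ C₃ (E x t) haa]
      exact (hmul _ x t).mpr g3
    · rw [hx2 1 t x, hztt x t, hc3, hxxzt t x, hc4, hz3t x t, vA0_1, vA1_1s, vA3_1s,
        cond4_identity (k : ℂ) c (Re : ℂ) ((Real.sqrt β : ℝ) : ℂ) μ C₁ C₂ C₃ C₄ (E x t)
          hsne hRene hμ']
      exact (hmul _ x t).mpr g4
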